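/- Conversely, on the submanifold defined by the Legendre–Ostrogradsky relations, the system of ODEs { q_l' = q_{l+1} (0 ≤ l ≤ 2k−2), (p^0_A)' = ∂L̂/∂q_0^A, (p^i_A)' = ∂L̂/∂q_i^A − p_A^{i-1} } together with the Euler–Lagrange equation Σ_{i=0}^{k}(−1)^i (d/dt)^i(∂L/∂q_i^A ∘ j^k q_0) = 0 is equivalent to: q_0 solves the Euler–Lagrange equation, q_i = q_0^{(i)}, and p^i are given by the Ostrogradsky momentum formulas p_A^{r-1} = Σ_{i=0}^{k-r}(−1)^i (d/dt)^i(∂L/∂q_{r+i}^A ∘ j^k q_0). -/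

import Mathlib

/-! **Equivalence of the unified ODE system with the Euler–Lagrange equation
plus Ostrogradsky momenta.**

`L = L(t, q_0, …, q_k)` smooth (regarded as a function on the extended jet
space `(t, q_0, …, q_{2k})` depending only on the variables up to `q_k`).
For curves `qc : ℝ → (ℝ^n)^{2k}` and `pc : ℝ → (ℝ^n)^k`, on the submanifold
defined by the Legendre–Ostrogradsky relations
`p_A^{r-1} = Σ_{i=0}^{k-r} (−1)^i d_T^i(∂L/∂q_{r+i}^A)`, the system of ODEs
`{ q_l' = q_{l+1} (0 ≤ l ≤ 2k−2), (p^0_A)' = ∂L̂/∂q_0^A,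
   (p^i_A)' = ∂L̂/∂q_i^A − p_A^{i-1} }`
together with the Euler–Lagrange equation
`Σ_{i=0}^{k} (−1)^i (d/dt)^i(∂L/∂q_i^A ∘ j^k q_0) = 0`
is equivalent to: `q_0` solves the Euler–Lagrange equation, `q_i = q_0^{(i)}`,
and the momenta are given by the Ostrogradsky formulas
`p_A^{r-1} = Σ_{i=0}^{k-r} (−1)^i (d/dt)^i(∂L/∂q_{r+i}^A ∘ j^k q_0)`. -/

variable (n k : ℕ)

abbrev Jbig (n k : ℕ) := ℝ × (Fin (2 * k + 1) → Fin n → ℝ)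

noncomputable def pd (L : Jbig n k → ℝ) (j : Fin (2 * k + 1)) (A : Fin n)
    (x : Jbig n k) : ℝ :=
  fderiv ℝ L x ((0 : ℝ), Pi.single j (Pi.single A (1 : ℝ)))

/-- Total derivative `d_T` on the extended jet space. -/
noncomputable def dT (f : Jbig n k → ℝ) (x : Jbig n k) : ℝ :=
  fderiv ℝ f x ((1 : ℝ), 0) +
    ∑ i : Fin (2 * k + 1), ∑ A : Fin n,
      (if h : i.1 + 1 < 2 * k + 1 then x.2 ⟨i.1 + 1, h⟩ A else 0) *
        fderiv ℝ f x ((0 : ℝ), Pi.single i (Pi.single A (1 : ℝ)))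

-- projection keeping slots ≤ m
noncomputable def Lpi (n k m : ℕ) : Jbig n k →L[ℝ] Jbig n k :=
  (ContinuousLinearMap.id ℝ ℝ).prodMap
    (ContinuousLinearMap.pi fun i : Fin (2*k+1) =>
      if i.1 ≤ m then ContinuousLinearMap.proj i else 0)

variable {n k}

lemma Lpi_apply (m : ℕ) (x : Jbig n k) :
    Lpi n k m x = (x.1, fun i => if i.1 ≤ m then x.2 i else 0) := by
  refine Prod.ext rfl ?_
  funext i
  simp [Lpi, apply_ite (fun (T : (Fin (2*k+1) → Fin n → ℝ) →L[ℝ] (Fin n → ℝ)) => T x.2)]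

lemma Lpi_Lpi {m m' : ℕ} (h : m ≤ m') (x : Jbig n k) :
    Lpi n k m (Lpi n k m' x) = Lpi n k m x := by
  simp only [Lpi_apply]
  refine Prod.ext rfl ?_
  funext i
  by_cases hi : i.1 ≤ m
  · simp [hi, hi.trans h]
  · simp [hi]

lemma dep_mono {f : Jbig n k → ℝ} {m m' : ℕ} (h : m ≤ m')
    (hd : ∀ x, f (Lpi n k m x) = f x) : ∀ x, f (Lpi n k m' x) = f x := by
  intro x
  calc f (Lpi n k m' x) = f (Lpi n k m (Lpi n k m' x)) := (hd _).symm
    _ = f (Lpi n k m x) := by rw [Lpi_Lpi h]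
    _ = f x := hd x

lemma fderiv_dep {f : Jbig n k → ℝ} (hf : ContDiff ℝ (⊤ : ℕ∞) f) {m : ℕ}
    (hd : ∀ x, f (Lpi n k m x) = f x) (x v : Jbig n k) :
    fderiv ℝ f x v = fderiv ℝ f (Lpi n k m x) (Lpi n k m v) := by
  have h1 : HasFDerivAt (fun y => f (Lpi n k m y))
      ((fderiv ℝ f (Lpi n k m x)).comp (Lpi n k m)) x :=
    ((hf.differentiable (by simp) _).hasFDerivAt).comp x ((Lpi n k m).hasFDerivAt)
  have hfe : f = fun y => f (Lpi n k m y) := funext fun y => (hd y).symm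
  have h2 : fderiv ℝ f x = (fderiv ℝ f (Lpi n k m x)).comp (Lpi n k m) := by
    conv_lhs => rw [hfe]
    exact h1.fderiv
  rw [h2]; rfl

lemma Lpi_single (m : ℕ) (j : Fin (2*k+1)) (w : Fin n → ℝ) :
    Lpi n k m ((0:ℝ), Pi.single j w)
      = if j.1 ≤ m then ((0:ℝ), Pi.single j w) else 0 := by
  rw [Lpi_apply]
  by_cases hj : j.1 ≤ m
  · simp only [hj, if_true]
    refine Prod.ext rfl ?_
    funext i
    by_cases hi : i.1 ≤ m
    · simp [hi]
    · have : i ≠ j := fun h => hi (h ▸ hj)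
      simp [hi, Pi.single_eq_of_ne this]
  · simp only [hj, if_false]
    refine Prod.ext rfl ?_
    funext i
    by_cases hi : i.1 ≤ m
    · have : i ≠ j := fun h => hj (h ▸ hi)
      simp [hi, Pi.single_eq_of_ne this]
    · simp [hi]

lemma pd_dep {L : Jbig n k → ℝ} (hL : ContDiff ℝ (⊤ : ℕ∞) L) {m : ℕ}
    (hd : ∀ x, L (Lpi n k m x) = L x) (j : Fin (2*k+1)) (A : Fin n) :
    ∀ x, pd n k L j A (Lpi n k m x) = pd n k L j A x := by
  intro x
  unfold pd
  rw [fderiv_dep hL hd x, fderiv_dep hL hd (Lpi n k m x), Lpi_Lpi le_rfl]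

lemma pd_zero {L : Jbig n k → ℝ} (hL : ContDiff ℝ (⊤ : ℕ∞) L) {m : ℕ}
    (hd : ∀ x, L (Lpi n k m x) = L x) {j : Fin (2*k+1)} (hj : m < j.1) (A : Fin n)
    (x : Jbig n k) : pd n k L j A x = 0 := by
  unfold pd
  rw [fderiv_dep hL hd x, Lpi_single, if_neg (by omega), map_zero]

lemma top_le : ((⊤:ℕ∞) : WithTop ℕ∞) + 1 ≤ ((⊤:ℕ∞) : WithTop ℕ∞) := by
  exact_mod_cast le_top

lemma fderiv_apply_smooth {f : Jbig n k → ℝ} (hf : ContDiff ℝ (⊤ : ℕ∞) f)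
    (v : Jbig n k) : ContDiff ℝ (⊤ : ℕ∞) (fun x => fderiv ℝ f x v) :=
  (hf.fderiv_right top_le).clm_apply contDiff_const

lemma pd_smooth {L : Jbig n k → ℝ} (hL : ContDiff ℝ (⊤ : ℕ∞) L)
    (j : Fin (2*k+1)) (A : Fin n) : ContDiff ℝ (⊤ : ℕ∞) (pd n k L j A) :=
  fderiv_apply_smooth hL _

lemma coord_smooth (j : Fin (2*k+1)) (A : Fin n) :
    ContDiff ℝ (⊤ : ℕ∞) (fun x : Jbig n k => x.2 j A) :=
  contDiff_pi.mp (contDiff_pi.mp contDiff_snd j) A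

lemma dT_smooth {f : Jbig n k → ℝ} (hf : ContDiff ℝ (⊤ : ℕ∞) f) :
    ContDiff ℝ (⊤ : ℕ∞) (dT n k f) := by
  unfold dT
  refine (fderiv_apply_smooth hf _).add ?_
  refine ContDiff.sum fun i _ => ContDiff.sum fun A _ => ?_
  refine ContDiff.mul ?_ (fderiv_apply_smooth hf _)
  by_cases h : i.1 + 1 < 2*k+1
  · simpa [h] using coord_smooth (⟨i.1+1, h⟩ : Fin (2*k+1)) A
  · simp [h]; exact contDiff_const

lemma dT_dep {f : Jbig n k → ℝ} (hf : ContDiff ℝ (⊤ : ℕ∞) f) {m : ℕ}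
    (hd : ∀ x, f (Lpi n k m x) = f x) :
    ∀ x, dT n k f (Lpi n k (m+1) x) = dT n k f x := by
  intro x
  unfold dT
  have hbase : ∀ v : Jbig n k,
      fderiv ℝ f (Lpi n k (m+1) x) v = fderiv ℝ f (Lpi n k m x) (Lpi n k m v) := by
    intro v
    rw [fderiv_dep hf hd (Lpi n k (m+1) x) v, Lpi_Lpi (by omega)]
  have hbase' : ∀ v : Jbig n k,
      fderiv ℝ f x v = fderiv ℝ f (Lpi n k m x) (Lpi n k m v) :=
    fun v => fderiv_dep hf hd x v
  congr 1
  · rw [hbase, hbase']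
  · refine Finset.sum_congr rfl fun i _ => Finset.sum_congr rfl fun A _ => ?_
    rw [hbase, hbase']
    by_cases him : i.1 ≤ m
    · congr 1
      by_cases h : i.1 + 1 < 2*k+1
      · simp only [h, dif_pos, Lpi_apply]
        simp only [show i.1 + 1 ≤ m + 1 from by omega, if_pos]
      · simp [h]
    · rw [Lpi_single, if_neg (by omega), map_zero, mul_zero, mul_zero]

lemma pi_expand (v : Fin (2*k+1) → Fin n → ℝ) :
    v = ∑ i : Fin (2*k+1), ∑ A : Fin n,
      v i A • (Pi.single i (Pi.single A (1:ℝ)) : Fin (2*k+1) → Fin n → ℝ) := by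
  funext j B
  simp only [Finset.sum_apply, Pi.smul_apply, Pi.single_apply, smul_eq_mul]
  rw [Finset.sum_eq_single j]
  · rw [Finset.sum_eq_single B] <;> simp +contextual [eq_comm]
  · intro b _ hb
    simp [Ne.symm hb]
  · simp

lemma fderiv_expand (φ : Jbig n k →L[ℝ] ℝ) (a : ℝ) (v : Fin (2*k+1) → Fin n → ℝ) :
    φ (a, v) = a * φ ((1:ℝ), 0) +
      ∑ i : Fin (2*k+1), ∑ A : Fin n,
        v i A * φ ((0:ℝ), Pi.single i (Pi.single A (1:ℝ))) := by
  have hv : ((a, v) : Jbig n k) = a • (((1:ℝ), 0) : Jbig n k) +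
      ∑ i : Fin (2*k+1), ∑ A : Fin n,
        v i A • (((0:ℝ), Pi.single i (Pi.single A (1:ℝ))) : Jbig n k) := by
    refine Prod.ext ?_ ?_
    · simp [Prod.fst_sum]
    · simp only [Prod.snd_add, Prod.smul_snd, Prod.snd_sum]
      conv_lhs => rw [pi_expand v]
      simp
  rw [hv, map_add, map_smul, map_sum]
  simp only [map_sum, map_smul, smul_eq_mul]

lemma hasDerivAt_curve {f : Jbig n k → ℝ} (hf : ContDiff ℝ (⊤ : ℕ∞) f) {m : ℕ}
    (hm : m < 2*k) (hd : ∀ x, f (Lpi n k m x) = f x)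
    (Q : ℝ → Fin (2*k+1) → Fin n → ℝ)
    (hder : ∀ (t : ℝ) (i : Fin (2*k+1)) (h : i.1+1 < 2*k+1) (A : Fin n),
      HasDerivAt (fun s => Q s i A) (Q t ⟨i.1+1, h⟩ A) t)
    (t : ℝ) : HasDerivAt (fun s => f (s, Q s)) (dT n k f (t, Q t)) t := by
  classical
  set c : ℝ → Jbig n k := fun s =>
    (s, fun i A => if i.1 ≤ m then Q s i A else 0) with hc_def
  have hcL : ∀ s, c s = Lpi n k m (s, Q s) := by
    intro s
    rw [Lpi_apply]
    refine Prod.ext rfl ?_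
    funext i A
    by_cases hi : i.1 ≤ m <;> simp [hi, hc_def]
  have hfc : ∀ s, f (s, Q s) = f (c s) := by
    intro s; rw [hcL]; exact (hd _).symm
  set V : Fin (2*k+1) → Fin n → ℝ := fun i A =>
    if h : i.1 ≤ m then Q t ⟨i.1+1, by omega⟩ A else 0 with hV_def
  have hc : HasDerivAt c ((1:ℝ), V) t := by
    refine HasDerivAt.prodMk (hasDerivAt_id t) ?_
    refine hasDerivAt_pi.2 fun i => hasDerivAt_pi.2 fun A => ?_
    by_cases hi : i.1 ≤ m
    · simp only [hi, if_true, hV_def, dif_pos]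
      exact hder t i (by omega) A
    · simp only [hi, if_false, hV_def, dif_neg]
      exact hasDerivAt_const t 0
  have hcomp : HasDerivAt (fun s => f (c s)) (fderiv ℝ f (c t) ((1:ℝ), V)) t :=
    ((hf.differentiable (by simp) (c t)).hasFDerivAt).comp_hasDerivAt t hc
  have hfun : (fun s => f (s, Q s)) = fun s => f (c s) := funext hfc
  rw [hfun]
  convert hcomp using 1
  -- show dT f (t, Q t) = fderiv f (c t) (1, V)
  rw [fderiv_expand (fderiv ℝ f (c t)) 1 V]
  have hpt : Lpi n k m (t, Q t) = Lpi n k m (c t) := by rw [hcL, Lpi_Lpi le_rfl]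
  have hbase : ∀ v : Jbig n k,
      fderiv ℝ f (t, Q t) v = fderiv ℝ f (c t) (Lpi n k m v) := by
    intro v
    rw [fderiv_dep hf hd (t, Q t) v, hpt,
      fderiv_dep hf hd (c t) (Lpi n k m v), Lpi_Lpi le_rfl]
  unfold dT
  congr 1
  · rw [hbase, one_mul]
    congr 1
    rw [Lpi_apply]
    refine Prod.ext rfl ?_
    funext i; by_cases hi : i.1 ≤ m <;> simp [hi]
  · refine Finset.sum_congr rfl fun i _ => Finset.sum_congr rfl fun A _ => ?_
    by_cases hi : i.1 ≤ m
    · have h1 : i.1 + 1 < 2*k+1 := by omega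
      congr 1
      · simp [hV_def, hi, h1]
      · rw [hbase, Lpi_single, if_pos hi]
    · rw [hbase, Lpi_single, if_neg hi, map_zero, mul_zero]
      simp [hV_def, hi]


variable (n k)

/-- Coordinates of the curve, included into the extended jet space. -/
def iotaC (qc : ℝ → Fin (2 * k) → Fin n → ℝ) (t : ℝ) : Jbig n k :=
  (t, fun i A => if h : i.1 < 2 * k then qc t ⟨i.1, h⟩ A else 0)

/-- The (full) jet prolongation of the base curve `q_0`. -/
noncomputable def jetC (hk : 1 ≤ k) (qc : ℝ → Fin (2 * k) → Fin n → ℝ)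
    (t : ℝ) : Jbig n k :=
  (t, fun i A => iteratedDeriv i.1 (fun s => qc s ⟨0, by omega⟩ A) t)

variable {n k}

lemma dT_iter_smooth {f : Jbig n k → ℝ} (hf : ContDiff ℝ (⊤ : ℕ∞) f) (s : ℕ) :
    ContDiff ℝ (⊤ : ℕ∞) ((dT n k)^[s] f) := by
  induction s generalizing f with
  | zero => exact hf
  | succ s ih => rw [Function.iterate_succ_apply]; exact ih (dT_smooth hf)

lemma dT_iter_dep {f : Jbig n k → ℝ} (hf : ContDiff ℝ (⊤ : ℕ∞) f) {m : ℕ}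
    (hd : ∀ x, f (Lpi n k m x) = f x) (s : ℕ) :
    ∀ x, (dT n k)^[s] f (Lpi n k (m+s) x) = (dT n k)^[s] f x := by
  induction s generalizing f m with
  | zero => exact hd
  | succ s ih =>
    intro x
    simp only [Function.iterate_succ_apply]
    rw [show m + (s+1) = (m+1) + s from by omega]
    exact ih (dT_smooth hf) (dT_dep hf hd) x

section Curves

variable (hk : 1 ≤ k) (qc : ℝ → Fin (2 * k) → Fin n → ℝ)
  (hqc : ∀ (l : Fin (2 * k)) (A : Fin n), ContDiff ℝ (⊤ : ℕ∞) fun t => qc t l A)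

include hk hqc

lemma iterD_smooth (i : ℕ) (A : Fin n) :
    ContDiff ℝ (⊤ : ℕ∞) (iteratedDeriv i (fun s => qc s ⟨0, by omega⟩ A)) := by
  rw [iteratedDeriv_eq_iterate]
  exact_mod_cast ContDiff.iterate_deriv i (by exact_mod_cast hqc _ A)

lemma iterD_hasDerivAt (i : ℕ) (A : Fin n) (t : ℝ) :
    HasDerivAt (iteratedDeriv i (fun s => qc s ⟨0, by omega⟩ A))
      (iteratedDeriv (i+1) (fun s => qc s ⟨0, by omega⟩ A) t) t := by
  rw [iteratedDeriv_succ]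
  exact (((iterD_smooth hk qc hqc i A).differentiable
    (by simp)) t).hasDerivAt

lemma jet_hder (t : ℝ) (i : Fin (2*k+1)) (h : i.1+1 < 2*k+1) (A : Fin n) :
    HasDerivAt (fun s => (jetC n k hk qc s).2 i A)
      ((jetC n k hk qc t).2 ⟨i.1+1, h⟩ A) t := by
  simpa [jetC] using iterD_hasDerivAt hk qc hqc i.1 A t

lemma hasDerivAt_jet_comp {f : Jbig n k → ℝ} (hf : ContDiff ℝ (⊤ : ℕ∞) f) {m : ℕ}
    (hm : m < 2*k) (hd : ∀ x, f (Lpi n k m x) = f x) (t : ℝ) :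
    HasDerivAt (fun s => f (jetC n k hk qc s)) (dT n k f (jetC n k hk qc t)) t := by
  have := hasDerivAt_curve hf hm hd (fun s => (jetC n k hk qc s).2)
    (jet_hder hk qc hqc) t
  simpa [jetC] using this

lemma dT_iterate {f : Jbig n k → ℝ} (hf : ContDiff ℝ (⊤ : ℕ∞) f) {m : ℕ}
    (hd : ∀ x, f (Lpi n k m x) = f x) (i : ℕ) (him : m + i ≤ 2*k) (t : ℝ) :
    (dT n k)^[i] f (jetC n k hk qc t)
      = iteratedDeriv i (fun s => f (jetC n k hk qc s)) t := by
  induction i generalizing f m with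
  | zero => simp
  | succ i ih =>
    rw [Function.iterate_succ_apply,
      ih (dT_smooth hf) (dT_dep hf hd) (by omega), iteratedDeriv_succ']
    congr 1
    funext s
    exact ((hasDerivAt_jet_comp hk qc hqc hf (by omega) hd s).deriv).symm

lemma dep_iota_jet {f : Jbig n k → ℝ} {m : ℕ} (hd : ∀ x, f (Lpi n k m x) = f x)
    (hm : m < 2*k)
    (hol : ∀ (t : ℝ) (i : ℕ) (h : i < 2*k) (A : Fin n),
      qc t ⟨i, h⟩ A = iteratedDeriv i (fun s => qc s ⟨0, by omega⟩ A) t)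
    (t : ℝ) : f (iotaC n k qc t) = f (jetC n k hk qc t) := by
  rw [← hd (iotaC n k qc t), ← hd (jetC n k hk qc t)]
  congr 1
  simp only [Lpi_apply]
  refine Prod.ext rfl ?_
  funext i A
  by_cases hi : i.1 ≤ m
  · have h2 : i.1 < 2*k := by omega
    simp only [hi, if_true, iotaC, jetC, h2, dif_pos]
    exact hol t i.1 h2 A
  · simp [hi]

end Curves

lemma smooth_iterD_hasDerivAt {F : ℝ → ℝ} (hF : ContDiff ℝ (⊤ : ℕ∞) F) (i : ℕ) (t : ℝ) :
    HasDerivAt (iteratedDeriv i F) (iteratedDeriv (i+1) F t) t := by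
  have hs : ContDiff ℝ (⊤ : ℕ∞) (iteratedDeriv i F) := by
    rw [iteratedDeriv_eq_iterate]
    exact_mod_cast ContDiff.iterate_deriv i (by exact_mod_cast hF)
  rw [iteratedDeriv_succ]
  exact ((hs.differentiable (by simp)) t).hasDerivAt

lemma jetC_smooth (hk : 1 ≤ k) (qc : ℝ → Fin (2 * k) → Fin n → ℝ)
    (hqc : ∀ (l : Fin (2 * k)) (A : Fin n), ContDiff ℝ (⊤ : ℕ∞) fun t => qc t l A) :
    ContDiff ℝ (⊤ : ℕ∞) (jetC n k hk qc) := by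
  refine ContDiff.prodMk contDiff_id ?_
  refine contDiff_pi.2 fun i => contDiff_pi.2 fun A => ?_
  exact iterD_smooth hk qc hqc i.1 A

lemma pd_mk_fun_eq (hk : 1 ≤ k) (qc : ℝ → Fin (2 * k) → Fin n → ℝ)
    (L : Jbig n k → ℝ) {a b : ℕ} (ha : a < 2*k+1) (hb : b < 2*k+1) (h : a = b)
    (A : Fin n) :
    (fun s => pd n k L ⟨a, ha⟩ A (jetC n k hk qc s))
      = fun s => pd n k L ⟨b, hb⟩ A (jetC n k hk qc s) := by subst h; rfl

variable (n k) in
noncomputable def Gd (L : Jbig n k → ℝ) (hk : 1 ≤ k)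
    (qc : ℝ → Fin (2 * k) → Fin n → ℝ) (A : Fin n) (d j : ℕ) (u : ℝ) : ℝ :=
  if h : j < 2*k+1 then
    iteratedDeriv d (fun s => pd n k L ⟨j, h⟩ A (jetC n k hk qc s)) u
  else 0

lemma Gd_eq {L : Jbig n k → ℝ} {hk : 1 ≤ k} {qc : ℝ → Fin (2 * k) → Fin n → ℝ}
    {A : Fin n} {d j : ℕ} (h : j < 2*k+1) (u : ℝ) :
    Gd n k L hk qc A d j u
      = iteratedDeriv d (fun s => pd n k L ⟨j, h⟩ A (jetC n k hk qc s)) u :=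
  by unfold Gd; rw [dif_pos h]

lemma Gd_hasDerivAt {L : Jbig n k → ℝ} (hL : ContDiff ℝ (⊤ : ℕ∞) L) {hk : 1 ≤ k}
    {qc : ℝ → Fin (2 * k) → Fin n → ℝ}
    (hqc : ∀ (l : Fin (2 * k)) (A : Fin n), ContDiff ℝ (⊤ : ℕ∞) fun t => qc t l A)
    {A : Fin n} {d j : ℕ} (h : j < 2*k+1) (t : ℝ) :
    HasDerivAt (Gd n k L hk qc A d j) (Gd n k L hk qc A (d+1) j t) t := by
  have hfe : Gd n k L hk qc A d j
      = iteratedDeriv d (fun s => pd n k L ⟨j, h⟩ A (jetC n k hk qc s)) :=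
    funext fun u => Gd_eq h u
  rw [hfe, Gd_eq h]
  exact smooth_iterD_hasDerivAt ((pd_smooth hL _ A).comp (jetC_smooth hk qc hqc)) d t

/-- **Equivalence of the two characterizations of the unified dynamics.** -/
theorem unified_system_iff_EL_and_ostrogradsky (hk : 1 ≤ k)
    (L : Jbig n k → ℝ) (hL : ContDiff ℝ (⊤ : ℕ∞) L)
    (hdep : ∀ x y : Jbig n k, x.1 = y.1 →
      (∀ i : Fin (2 * k + 1), i.1 ≤ k → x.2 i = y.2 i) → L x = L y)
    (qc : ℝ → Fin (2 * k) → Fin n → ℝ) (pc : ℝ → Fin k → Fin n → ℝ)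
    (hqc : ∀ (l : Fin (2 * k)) (A : Fin n), ContDiff ℝ (⊤ : ℕ∞) fun t => qc t l A)
    (hpc : ∀ (i : Fin k) (A : Fin n), ContDiff ℝ (⊤ : ℕ∞) fun t => pc t i A) :
    -- the unified system on the Legendre–Ostrogradsky submanifold,
    -- together with the Euler–Lagrange equation …
    (((∀ (t : ℝ) (l : ℕ) (h1 : l + 1 < 2 * k) (A : Fin n),
        HasDerivAt (fun s => qc s ⟨l, by omega⟩ A) (qc t ⟨l + 1, h1⟩ A) t) ∧
      (∀ (t : ℝ) (A : Fin n),
        HasDerivAt (fun s => pc s ⟨0, by omega⟩ A)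
          (pd n k L ⟨0, by omega⟩ A (iotaC n k qc t)) t) ∧
      (∀ (t : ℝ) (i : ℕ) (h1 : 1 ≤ i) (h2 : i < k) (A : Fin n),
        HasDerivAt (fun s => pc s ⟨i, h2⟩ A)
          (pd n k L ⟨i, by omega⟩ A (iotaC n k qc t) -
            pc t ⟨i - 1, by omega⟩ A) t) ∧
      (∀ (t : ℝ) (ri : Fin k) (A : Fin n),
        pc t ri A = ∑ i : Fin (k - ri.1), (-1 : ℝ) ^ (i : ℕ) *
          (dT n k)^[i] (pd n k L
            ⟨ri.1 + 1 + i.1, by have := i.isLt; have := ri.isLt; omega⟩ A)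
            (iotaC n k qc t)) ∧
      (∀ (t : ℝ) (A : Fin n),
        ∑ i : Fin (k + 1), (-1 : ℝ) ^ (i : ℕ) *
          iteratedDeriv i.1
            (fun s => pd n k L ⟨i.1, by have := i.isLt; omega⟩ A
              (jetC n k hk qc s)) t = 0))
    ↔
    -- … is equivalent to: EL for `q_0`, holonomy, and the Ostrogradsky
    -- momentum formulas:
    ((∀ (t : ℝ) (A : Fin n),
        ∑ i : Fin (k + 1), (-1 : ℝ) ^ (i : ℕ) *
          iteratedDeriv i.1
            (fun s => pd n k L ⟨i.1, by have := i.isLt; omega⟩ A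
              (jetC n k hk qc s)) t = 0) ∧
     (∀ (t : ℝ) (i : ℕ) (h : i < 2 * k) (A : Fin n),
        qc t ⟨i, h⟩ A = iteratedDeriv i (fun s => qc s ⟨0, by omega⟩ A) t) ∧
     (∀ (t : ℝ) (ri : Fin k) (A : Fin n),
        pc t ri A = ∑ i : Fin (k - ri.1), (-1 : ℝ) ^ (i : ℕ) *
          iteratedDeriv i.1
            (fun s => pd n k L
              ⟨ri.1 + 1 + i.1, by have := i.isLt; have := ri.isLt; omega⟩ A
              (jetC n k hk qc s)) t))) := by
  classical
  have hdL : ∀ x, L (Lpi n k k x) = L x := by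
    intro x
    refine (hdep x (Lpi n k k x) ?_ ?_).symm
    · rw [Lpi_apply]
    · intro i hi; rw [Lpi_apply]; simp [hi]
  have hpdd : ∀ (j : Fin (2*k+1)) (A : Fin n) x,
      pd n k L j A (Lpi n k k x) = pd n k L j A x := fun j A => pd_dep hL hdL j A
  have key : (∀ (t : ℝ) (i : ℕ) (h : i < 2*k) (A : Fin n),
        qc t ⟨i, h⟩ A = iteratedDeriv i (fun s => qc s ⟨0, by omega⟩ A) t) →
      ∀ (j : Fin (2*k+1)) (A : Fin n) (i : ℕ), k + i < 2*k → ∀ t,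
      (dT n k)^[i] (pd n k L j A) (iotaC n k qc t)
        = iteratedDeriv i (fun s => pd n k L j A (jetC n k hk qc s)) t := by
    intro hol j A i hi t
    rw [dep_iota_jet hk qc hqc (dT_iter_dep (pd_smooth hL j A) (hpdd j A) i)
        (by omega) hol t,
      dT_iterate hk qc hqc (pd_smooth hL j A) (hpdd j A) i (by omega) t]
  constructor
  · rintro ⟨H1, _H2, _H3, H4, H5⟩
    have hol : ∀ (i : ℕ) (h : i < 2*k) (A : Fin n) (t : ℝ),
        qc t ⟨i, h⟩ A = iteratedDeriv i (fun s => qc s ⟨0, by omega⟩ A) t := by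
      intro i
      induction i with
      | zero => intro h A t; simp
      | succ i ih =>
        intro h A t
        rw [iteratedDeriv_succ]
        have hfe : iteratedDeriv i (fun s => qc s ⟨0, by omega⟩ A)
            = fun s => qc s ⟨i, by omega⟩ A := funext fun s => (ih (by omega) A s).symm
        rw [hfe]
        exact ((H1 t i h A).deriv).symm
    refine ⟨H5, fun t i h A => hol i h A t, ?_⟩
    intro t ri A
    rw [H4 t ri A]
    refine Finset.sum_congr rfl fun i _ => ?_
    congr 1
    exact key (fun t i h A => hol i h A t) _ A i.1
      (by have := i.isLt; have := ri.isLt; omega) t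
  · rintro ⟨EL, hol, mom⟩
    -- reformulate momenta and EL in terms of `Gd`
    have momG : ∀ (u : ℝ) (r : ℕ) (hr : r < k) (A : Fin n),
        pc u ⟨r, hr⟩ A = ∑ j ∈ Finset.range (k - r),
          (-1:ℝ)^j * Gd n k L hk qc A j (r + 1 + j) u := by
      intro u r hr A
      rw [mom u ⟨r, hr⟩ A,
        ← Fin.sum_univ_eq_sum_range
          (fun j : ℕ => (-1:ℝ)^j * Gd n k L hk qc A j (r + 1 + j) u) (k - r)]
      refine Finset.sum_congr rfl fun i _ => ?_
      show (-1:ℝ)^i.1 * iteratedDeriv i.1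
          (fun s => pd n k L ⟨r + 1 + i.1, by have := i.isLt; omega⟩ A
            (jetC n k hk qc s)) u
        = (-1:ℝ)^i.1 * Gd n k L hk qc A i.1 (r + 1 + i.1) u
      rw [Gd_eq (show r + 1 + i.1 < 2*k+1 by have := i.isLt; omega)]
    have ELG : ∀ (u : ℝ) (A : Fin n),
        ∑ j ∈ Finset.range (k + 1), (-1:ℝ)^j * Gd n k L hk qc A j j u = 0 := by
      intro u A
      rw [← EL u A,
        ← Fin.sum_univ_eq_sum_range
          (fun j : ℕ => (-1:ℝ)^j * Gd n k L hk qc A j j u) (k + 1)]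
      refine Finset.sum_congr rfl fun i _ => ?_
      show (-1:ℝ)^i.1 * Gd n k L hk qc A i.1 i.1 u
        = (-1:ℝ)^i.1 * iteratedDeriv i.1
            (fun s => pd n k L ⟨i.1, by have := i.isLt; omega⟩ A
              (jetC n k hk qc s)) u
      rw [Gd_eq (show i.1 < 2*k+1 by have := i.isLt; omega)]
    have keyG : ∀ (j : ℕ) (hj : j < 2*k+1) (hj2 : j ≤ k) (A : Fin n) (t : ℝ),
        pd n k L ⟨j, hj⟩ A (iotaC n k qc t) = Gd n k L hk qc A 0 j t := by
      intro j hj hj2 A t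
      have := key hol ⟨j, hj⟩ A 0 (by omega) t
      simp only [Function.iterate_zero, id_eq, iteratedDeriv_zero] at this
      rw [this, Gd_eq hj, iteratedDeriv_zero]
    refine ⟨?_, ?_, ?_, ?_, EL⟩
    · -- holonomy ODE
      intro t l h1 A
      refine HasDerivAt.congr_of_eventuallyEq ?_
        (Filter.Eventually.of_forall fun s => hol s l (by omega) A)
      rw [hol t (l+1) h1 A]
      exact iterD_hasDerivAt hk qc hqc l A t
    · -- p0 ODE
      intro t A
      have hD : HasDerivAt
          (fun u => ∑ j ∈ Finset.range k,
            (-1:ℝ)^j * Gd n k L hk qc A j (j + 1) u)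
          (∑ j ∈ Finset.range k,
            (-1:ℝ)^j * Gd n k L hk qc A (j + 1) (j + 1) t) t := by
        refine HasDerivAt.fun_sum fun j hj => ?_
        have hjk : j < k := Finset.mem_range.mp hj
        exact (Gd_hasDerivAt hL hqc (by omega) t).const_mul _
      have hval : pd n k L ⟨0, by omega⟩ A (iotaC n k qc t)
          = ∑ j ∈ Finset.range k,
            (-1:ℝ)^j * Gd n k L hk qc A (j + 1) (j + 1) t := by
        rw [keyG 0 (by omega) (by omega) A t]
        have h2 := ELG t A
        rw [Finset.sum_range_succ'] at h2
        have h3 : ∑ j ∈ Finset.range k,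
            (-1:ℝ)^(j+1) * Gd n k L hk qc A (j+1) (j+1) t
            = -∑ j ∈ Finset.range k,
                (-1:ℝ)^j * Gd n k L hk qc A (j+1) (j+1) t := by
          rw [← Finset.sum_neg_distrib]
          exact Finset.sum_congr rfl fun j _ => by ring
        rw [h3] at h2
        simp only [pow_zero, one_mul] at h2
        linarith
      rw [hval]
      refine hD.congr_of_eventuallyEq (Filter.Eventually.of_forall fun u => ?_)
      show pc u ⟨0, by omega⟩ A
        = ∑ j ∈ Finset.range k, (-1:ℝ)^j * Gd n k L hk qc A j (j + 1) u
      rw [momG u 0 (by omega) A, Nat.sub_zero]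
      refine Finset.sum_congr rfl fun j _ => ?_
      rw [show (0:ℕ) + 1 + j = j + 1 from by omega]
    · -- pi ODE
      intro t i h1 h2 A
      have hD : HasDerivAt
          (fun u => ∑ j ∈ Finset.range (k - i),
            (-1:ℝ)^j * Gd n k L hk qc A j (i + 1 + j) u)
          (∑ j ∈ Finset.range (k - i),
            (-1:ℝ)^j * Gd n k L hk qc A (j + 1) (i + 1 + j) t) t := by
        refine HasDerivAt.fun_sum fun j hj => ?_
        have hjk : j < k - i := Finset.mem_range.mp hj
        exact (Gd_hasDerivAt hL hqc (by omega) t).const_mul _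
      have hval : pd n k L ⟨i, by omega⟩ A (iotaC n k qc t) - pc t ⟨i - 1, by omega⟩ A
          = ∑ j ∈ Finset.range (k - i),
            (-1:ℝ)^j * Gd n k L hk qc A (j + 1) (i + 1 + j) t := by
        rw [keyG i (by omega) (by omega) A t, momG t (i - 1) (by omega) A]
        have hre : ∑ j ∈ Finset.range (k - (i-1)),
            (-1:ℝ)^j * Gd n k L hk qc A j ((i-1) + 1 + j) t
            = ∑ j ∈ Finset.range ((k - i) + 1),
              (-1:ℝ)^j * Gd n k L hk qc A j (i + j) t := by
          rw [show k - (i-1) = (k - i) + 1 from by omega]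
          exact Finset.sum_congr rfl fun j _ => by
            rw [show (i-1) + 1 + j = i + j from by omega]
        rw [hre, Finset.sum_range_succ']
        have h3 : ∑ j ∈ Finset.range (k - i),
            (-1:ℝ)^(j+1) * Gd n k L hk qc A (j+1) (i + (j+1)) t
            = -∑ j ∈ Finset.range (k - i),
                (-1:ℝ)^j * Gd n k L hk qc A (j+1) (i + 1 + j) t := by
          rw [← Finset.sum_neg_distrib]
          refine Finset.sum_congr rfl fun j _ => ?_
          rw [show i + (j+1) = i + 1 + j from by omega]
          ring
        rw [h3]
        simp only [pow_zero, one_mul, Nat.add_zero]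
        ring
      rw [hval]
      refine hD.congr_of_eventuallyEq (Filter.Eventually.of_forall fun u => ?_)
      show pc u ⟨i, h2⟩ A
        = ∑ j ∈ Finset.range (k - i), (-1:ℝ)^j * Gd n k L hk qc A j (i + 1 + j) u
      exact momG u i h2 A
    · -- Legendre–Ostrogradsky relations
      intro t ri A
      rw [mom t ri A]
      refine Finset.sum_congr rfl fun i _ => ?_
      congr 1
      exact (key hol _ A i.1 (by have := i.isLt; have := ri.isLt; omega) t).symm
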